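/- If R is the free (tensor) algebra T(V) on a vector space V, then Ω¹R is a free R-bimodule on V; that is, the natural map R ⊗ V ⊗ R → Ω¹R sending r ⊗ v ⊗ r' ↦ r·(dv)·r' is an isomorphism of R-bimodules, where dv = 1⊗v − v⊗1. -/

import Mathlib

open TensorProduct

noncomputable section Stmt2Aux

variable (k : Type*) [Field k] (V : Type*) [AddCommGroup V] [Module k V]

local notation "R" => TensorAlgebra k V
local notation "M" => TensorAlgebra k V ⊗[k] (V ⊗[k] TensorAlgebra k V)

/-- The right action of `Rᵐᵒᵖ` on `R ⊗ (V ⊗ R)`, multiplying the rightmost factor. -/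
def stmt2rop : (TensorAlgebra k V)ᵐᵒᵖ →+* Module.End k M where
  toFun a := LinearMap.lTensor _ (LinearMap.lTensor _ (LinearMap.mulRight k a.unop))
  map_one' := by ext r v r'; simp
  map_mul' x y := by ext r v r'; simp [mul_assoc]
  map_zero' := by ext r v r'; simp
  map_add' x y := by ext r v r'; simp [mul_add, TensorProduct.tmul_add]

instance stmt2ModOp : Module (TensorAlgebra k V)ᵐᵒᵖ M :=
  Module.compHom _ (stmt2rop k V)

instance (priority := 1100) stmt2SMulOp : SMul (TensorAlgebra k V)ᵐᵒᵖ M :=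
  (stmt2ModOp k V).toSMul

lemma stmt2_op_smul (a : (TensorAlgebra k V)ᵐᵒᵖ) (m : M) :
    a • m = stmt2rop k V a m := rfl

lemma stmt2_op_smul_tmul (a r r' : TensorAlgebra k V) (v : V) :
    (MulOpposite.op a) • (r ⊗ₜ[k] (v ⊗ₜ[k] r')) = r ⊗ₜ[k] (v ⊗ₜ[k] (r' * a)) := rfl

lemma stmt2_smul_tmul (a r r' : TensorAlgebra k V) (v : V) :
    a • (r ⊗ₜ[k] (v ⊗ₜ[k] r')) = (a * r) ⊗ₜ[k] (v ⊗ₜ[k] r') := rfl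

instance : SMulCommClass (TensorAlgebra k V) (TensorAlgebra k V)ᵐᵒᵖ M := by
  constructor
  intro a b m
  rw [stmt2_op_smul, stmt2_op_smul]
  induction m using TensorProduct.induction_on with
  | zero => simp
  | add x y hx hy => simp only [smul_add, map_add, hx, hy]
  | tmul r n =>
    show a • (r ⊗ₜ[k] _) = _
    rw [TensorProduct.smul_tmul', TensorProduct.smul_tmul']
    rfl

instance : IsScalarTower k (TensorAlgebra k V)ᵐᵒᵖ M := by
  constructor
  intro c b m
  rw [stmt2_op_smul, stmt2_op_smul]
  have h1 : c • b = MulOpposite.op (c • b.unop) := rfl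
  have h2 : LinearMap.mulRight k ((c • b).unop) = c • LinearMap.mulRight k b.unop := by
    apply LinearMap.ext; intro x
    show x * (c • b.unop) = c • (x * b.unop)
    rw [mul_smul_comm]
  show (LinearMap.lTensor _ (LinearMap.lTensor _ (LinearMap.mulRight k (c • b).unop))) m = _
  rw [h2, LinearMap.lTensor_smul, LinearMap.lTensor_smul]
  rfl

/-- The lift of `R` into the trivial square-zero extension `R ⊕ M` sending
`v` to `(ι v, 1 ⊗ v ⊗ 1)`. -/
def stmt2L : TensorAlgebra k V →ₐ[k] TrivSqZeroExt (TensorAlgebra k V) M :=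
  TensorAlgebra.lift k
    { toFun := fun v => TrivSqZeroExt.inl (TensorAlgebra.ι k v)
        + TrivSqZeroExt.inr ((1 : TensorAlgebra k V) ⊗ₜ[k] (v ⊗ₜ[k] (1 : TensorAlgebra k V)))
      map_add' := fun v w => by
        apply TrivSqZeroExt.ext <;>
          simp [TensorProduct.add_tmul, TensorProduct.tmul_add, add_add_add_comm]
      map_smul' := fun c v => by
        apply TrivSqZeroExt.ext
        · simp
        · simp only [TrivSqZeroExt.snd_smul, TrivSqZeroExt.snd_add, TrivSqZeroExt.snd_inl,
            TrivSqZeroExt.snd_inr, zero_add, RingHom.id_apply]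
          rw [← TensorProduct.tmul_smul, TensorProduct.smul_tmul'] }

lemma stmt2L_fst (a : TensorAlgebra k V) : (stmt2L k V a).fst = a := by
  have h : (TrivSqZeroExt.fstHom k (TensorAlgebra k V) M).comp (stmt2L k V)
      = AlgHom.id k (TensorAlgebra k V) := by
    apply TensorAlgebra.hom_ext
    apply LinearMap.ext
    intro v
    simp [stmt2L, TensorAlgebra.lift_ι_apply]
  simpa using AlgHom.congr_fun h a

/-- The universal derivation `D : R →ₗ[k] R ⊗ V ⊗ R`. -/
def stmt2D : TensorAlgebra k V →ₗ[k] M :=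
  ((TrivSqZeroExt.sndHom (TensorAlgebra k V) M).restrictScalars k) ∘ₗ (stmt2L k V).toLinearMap

lemma stmt2D_mul (a b : TensorAlgebra k V) :
    stmt2D k V (a * b) = a • stmt2D k V b + (MulOpposite.op b) • stmt2D k V a := by
  show (stmt2L k V (a * b)).snd = _
  rw [map_mul, TrivSqZeroExt.snd_mul, stmt2L_fst, stmt2L_fst]
  rfl

lemma stmt2D_ι (v : V) :
    stmt2D k V (TensorAlgebra.ι k v)
      = (1 : TensorAlgebra k V) ⊗ₜ[k] (v ⊗ₜ[k] (1 : TensorAlgebra k V)) := by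
  show (stmt2L k V (TensorAlgebra.ι k v)).snd = _
  rw [stmt2L, TensorAlgebra.lift_ι_apply]
  simp

lemma stmt2D_algebraMap (c : k) :
    stmt2D k V (algebraMap k (TensorAlgebra k V) c) = 0 := by
  show (stmt2L k V (algebraMap k (TensorAlgebra k V) c)).snd = _
  rw [AlgHom.commutes]
  rfl

/-- The map `ψ : R ⊗ V ⊗ R → R ⊗ R`, `r ⊗ v ⊗ r' ↦ r ⊗ (ιv)r' - r(ιv) ⊗ r'`. -/
def stmt2psi : M →ₗ[k] TensorAlgebra k V ⊗[k] TensorAlgebra k V :=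
  LinearMap.lTensor _
      ((LinearMap.mul' k (TensorAlgebra k V)).comp
        (TensorProduct.map (TensorAlgebra.ι k) LinearMap.id))
    - (TensorProduct.map
        ((LinearMap.mul' k (TensorAlgebra k V)).comp
          (TensorProduct.map LinearMap.id (TensorAlgebra.ι k)))
        LinearMap.id).comp (TensorProduct.assoc k _ _ _).symm.toLinearMap

lemma stmt2psi_tmul (r r' : TensorAlgebra k V) (v : V) :
    stmt2psi k V (r ⊗ₜ[k] (v ⊗ₜ[k] r'))
      = r ⊗ₜ[k] (TensorAlgebra.ι k v * r') - (r * TensorAlgebra.ι k v) ⊗ₜ[k] r' := by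
  simp [stmt2psi, TensorProduct.assoc_symm_tmul]

/-- `ψ` intertwines the left action with left multiplication by `a ⊗ 1`. -/
lemma stmt2psi_smul (a : TensorAlgebra k V) (m : M) :
    stmt2psi k V (a • m) = (a ⊗ₜ[k] (1 : TensorAlgebra k V)) * stmt2psi k V m := by
  induction m using TensorProduct.induction_on with
  | zero => simp
  | add x y hx hy => rw [smul_add, map_add, map_add, mul_add, hx, hy]
  | tmul r n =>
    induction n using TensorProduct.induction_on with
    | zero => simp [TensorProduct.tmul_zero]
    | add x y hx hy =>
        rw [TensorProduct.tmul_add, smul_add, map_add, map_add, mul_add, hx, hy]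
    | tmul v r' =>
        simp only [stmt2_smul_tmul, stmt2psi_tmul, mul_sub,
          Algebra.TensorProduct.tmul_mul_tmul, one_mul, mul_one, mul_assoc]

/-- `ψ` intertwines the right action with right multiplication by `1 ⊗ b`. -/
lemma stmt2psi_op_smul (b : TensorAlgebra k V) (m : M) :
    stmt2psi k V ((MulOpposite.op b) • m)
      = stmt2psi k V m * ((1 : TensorAlgebra k V) ⊗ₜ[k] b) := by
  rw [stmt2_op_smul]
  induction m using TensorProduct.induction_on with
  | zero => simp
  | add x y hx hy => rw [map_add, map_add, map_add, add_mul, hx, hy]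
  | tmul r n =>
    induction n using TensorProduct.induction_on with
    | zero => simp [TensorProduct.tmul_zero]
    | add x y hx hy =>
        rw [TensorProduct.tmul_add, map_add, map_add, map_add, add_mul, hx, hy]
    | tmul v r' =>
        have h0 : (stmt2rop k V) (MulOpposite.op b) (r ⊗ₜ[k] (v ⊗ₜ[k] r'))
            = r ⊗ₜ[k] (v ⊗ₜ[k] (r' * b)) := rfl
        simp only [h0, stmt2psi_tmul, sub_mul,
          Algebra.TensorProduct.tmul_mul_tmul, mul_one, mul_assoc]

lemma stmt2psi_D (b : TensorAlgebra k V) :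
    stmt2psi k V (stmt2D k V b)
      = (1 : TensorAlgebra k V) ⊗ₜ[k] b - b ⊗ₜ[k] (1 : TensorAlgebra k V) := by
  induction b using TensorAlgebra.induction with
  | algebraMap c =>
      rw [stmt2D_algebraMap, map_zero]
      rw [Algebra.algebraMap_eq_smul_one, TensorProduct.tmul_smul, TensorProduct.smul_tmul',
        sub_self]
  | ι v =>
      rw [stmt2D_ι, stmt2psi_tmul, mul_one, one_mul]
  | mul a b ha hb =>
      rw [stmt2D_mul, map_add, stmt2psi_smul, stmt2psi_op_smul, ha, hb, mul_sub, sub_mul]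
      simp only [Algebra.TensorProduct.tmul_mul_tmul, one_mul, mul_one]
      abel
  | add a b ha hb =>
      rw [map_add, map_add, ha, hb, TensorProduct.tmul_add, TensorProduct.add_tmul]
      abel

/-- The one-sided inverse `g : R ⊗ R → R ⊗ V ⊗ R`, `a ⊗ b ↦ a • D b`. -/
def stmt2g : TensorAlgebra k V ⊗[k] TensorAlgebra k V →ₗ[k] M :=
  TensorProduct.lift
    (LinearMap.mk₂ k (fun a b => a • stmt2D k V b)
      (fun a a' b => by rw [add_smul])
      (fun c a b => by exact smul_assoc c a _)
      (fun a b b' => by rw [map_add, smul_add])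
      (fun c a b => by rw [map_smul]; exact (smul_comm c a _).symm))

lemma stmt2g_tmul (a b : TensorAlgebra k V) :
    stmt2g k V (a ⊗ₜ[k] b) = a • stmt2D k V b := rfl

lemma stmt2g_psi (m : M) : stmt2g k V (stmt2psi k V m) = m := by
  induction m using TensorProduct.induction_on with
  | zero => simp
  | add x y hx hy => rw [map_add, map_add, hx, hy]
  | tmul r n =>
    induction n using TensorProduct.induction_on with
    | zero => simp [TensorProduct.tmul_zero]
    | add x y hx hy =>
        rw [TensorProduct.tmul_add, map_add, map_add, hx, hy]
    | tmul v r' =>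
        rw [stmt2psi_tmul, map_sub, stmt2g_tmul, stmt2g_tmul, stmt2D_mul, smul_add,
          stmt2D_ι, mul_smul]
        have : (MulOpposite.op r') •
            ((1 : TensorAlgebra k V) ⊗ₜ[k] (v ⊗ₜ[k] (1 : TensorAlgebra k V)))
            = (1 : TensorAlgebra k V) ⊗ₜ[k] (v ⊗ₜ[k] r') := by
          rw [stmt2_op_smul_tmul, one_mul]
        rw [this, stmt2_smul_tmul, mul_one]
        abel

lemma stmt2psi_g (x : TensorAlgebra k V ⊗[k] TensorAlgebra k V) :
    stmt2psi k V (stmt2g k V x)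
      = x - (LinearMap.mul' k (TensorAlgebra k V) x) ⊗ₜ[k] (1 : TensorAlgebra k V) := by
  induction x using TensorProduct.induction_on with
  | zero => simp
  | add x y hx hy =>
      rw [map_add, map_add, hx, hy, map_add, TensorProduct.add_tmul]
      abel
  | tmul a b =>
      rw [stmt2g_tmul, stmt2psi_smul, stmt2psi_D, mul_sub]
      simp only [Algebra.TensorProduct.tmul_mul_tmul, one_mul, mul_one,
        LinearMap.mul'_apply]

lemma stmt2mul_psi (m : M) : LinearMap.mul' k (TensorAlgebra k V) (stmt2psi k V m) = 0 := by
  induction m using TensorProduct.induction_on with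
  | zero => simp
  | add x y hx hy => rw [map_add, map_add, hx, hy, add_zero]
  | tmul r n =>
    induction n using TensorProduct.induction_on with
    | zero => simp [TensorProduct.tmul_zero]
    | add x y hx hy =>
        rw [TensorProduct.tmul_add, map_add, map_add, hx, hy, add_zero]
    | tmul v r' =>
        rw [stmt2psi_tmul, map_sub, LinearMap.mul'_apply, LinearMap.mul'_apply, mul_assoc,
          sub_self]

end Stmt2Aux

theorem stmt2 (k : Type*) [Field k] (V : Type*) [AddCommGroup V] [Module k V] :
    ∃ ψ : TensorAlgebra k V ⊗[k] (V ⊗[k] TensorAlgebra k V) →ₗ[k]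
        TensorAlgebra k V ⊗[k] TensorAlgebra k V,
      (∀ (r r' : TensorAlgebra k V) (v : V),
        ψ (r ⊗ₜ[k] (v ⊗ₜ[k] r')) =
          (r ⊗ₜ[k] (1 : TensorAlgebra k V)) *
            ((1 : TensorAlgebra k V) ⊗ₜ[k] TensorAlgebra.ι k v
              - TensorAlgebra.ι k v ⊗ₜ[k] (1 : TensorAlgebra k V)) *
            ((1 : TensorAlgebra k V) ⊗ₜ[k] r')) ∧
      Function.Injective ψ ∧
      LinearMap.range ψ = LinearMap.ker (LinearMap.mul' k (TensorAlgebra k V)) := by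
  refine ⟨stmt2psi k V, ?_, ?_, ?_⟩
  · intro r r' v
    rw [stmt2psi_tmul]
    rw [mul_sub, sub_mul]
    simp only [Algebra.TensorProduct.tmul_mul_tmul, one_mul, mul_one]
  · exact Function.LeftInverse.injective (stmt2g_psi k V)
  · apply le_antisymm
    · rintro y ⟨m, rfl⟩
      exact LinearMap.mem_ker.mpr (stmt2mul_psi k V m)
    · intro x hx
      refine ⟨stmt2g k V x, ?_⟩
      rw [stmt2psi_g, LinearMap.mem_ker.mp hx, TensorProduct.zero_tmul, sub_zero]
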